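/- (Requirement model conservation.) Let f be the output of TransformCtoT on a multilevel clustering with local buses over finite index sets I (plants) and J (requirements), initially invoked with the full requirement index set J at the root and empty requirement sets at all other nodes. Then at every stage of the traversal the requirement sets carried by the nodes are pairwise disjoint and their union over all nodes equals J, and in the final output tree every requirement index j ∈ J belongs to the requirement set of exactly one node's synthesis subproblem. -/

import Mathlib

attribute [local instance] Classical.propDecidable

/-- A multilevel clustering with local buses: each node carries an element set `A`
(indices of plant components), a list `B` of bus children, a list `M` of non-bus
children, and a requirement index set `R`. -/
inductive MLC (I J : Type) : Type where
  | mk : Finset I → List (MLC I J) → List (MLC I J) → Finset J → MLC I J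

namespace MLC

variable {I J : Type}

/-- The element set `A(n)` of a node. -/
def elems : MLC I J → Finset I | mk A _ _ _ => A
/-- The bus children `B(n)` of a node. -/
def busCh : MLC I J → List (MLC I J) | mk _ B _ _ => B
/-- The non-bus children `M(n)` of a node. -/
def nonbusCh : MLC I J → List (MLC I J) | mk _ _ M _ => M
/-- The requirement index set `R(n)` of a node. -/
def reqs : MLC I J → Finset J | mk _ _ _ R => R
/-- All children `B(n) ∪ M(n)` of a node. -/
def children (t : MLC I J) : List (MLC I J) := t.busCh ++ t.nonbusCh
/-- Replace the requirement set carried by a node. -/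
def setReqs : MLC I J → Finset J → MLC I J | mk A B M _, R' => mk A B M R'

/-- Well-formedness of a multilevel clustering with local buses: a leaf has a
singleton element set and no children; an internal node has at least two children,
whose element sets are nonempty, pairwise disjoint and whose union is the node's
element set. -/
inductive WF : MLC I J → Prop where
  | leaf : ∀ (A : Finset I) (R : Finset J), A.card = 1 → WF (mk A [] [] R)
  | node : ∀ (A : Finset I) (B M : List (MLC I J)) (R : Finset J),
      2 ≤ (B ++ M).length →
      (∀ c ∈ B ++ M, (elems c).Nonempty) →
      (B ++ M).Pairwise (fun c d => Disjoint (elems c) (elems d)) →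
      ((B ++ M).map elems).foldr (· ∪ ·) ∅ = A →
      (∀ c ∈ B ++ M, WF c) →
      WF (mk A B M R)

end MLC

variable {I J : Type}

/-- Requirement `r` is related to cluster `c`: some plant index in the element set of
`c` is involved in `r` according to the domain mapping matrix `PR`. -/
def rel (PR : I → J → Prop) (r : J) (c : MLC I J) : Prop := ∃ p ∈ c.elems, PR p r

/-- The sublist of clusters of `cs` related to requirement `r`. -/
noncomputable def relF (PR : I → J → Prop) (r : J) (cs : List (MLC I J)) :
    List (MLC I J) :=
  cs.filter fun c => decide (rel PR r c)

/-- The requirements of `R` that stay at a node with bus children `B` and non-bus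
children `M`: those for which neither exactly one non-bus child is related, nor
(no non-bus child and exactly one bus child is related). -/
noncomputable def stayReqs (PR : I → J → Prop) (B M : List (MLC I J)) (R : Finset J) :
    Finset J :=
  R.filter fun r =>
    ¬ (relF PR r M).length = 1 ∧ ¬ ((relF PR r M) = [] ∧ (relF PR r B).length = 1)

/-- The requirements of `R` moved by PropReq into the non-bus child `c`:
`c` is the unique related non-bus cluster. -/
noncomputable def toNonbus (PR : I → J → Prop) (M : List (MLC I J)) (R : Finset J)
    (c : MLC I J) : Finset J :=
  R.filter fun r => relF PR r M = [c]

/-- The requirements of `R` moved by PropReq into the bus child `c`: no non-bus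
cluster is related and `c` is the unique related bus cluster. -/
noncomputable def toBus (PR : I → J → Prop) (B M : List (MLC I J)) (R : Finset J)
    (c : MLC I J) : Finset J :=
  R.filter fun r => relF PR r M = [] ∧ relF PR r B = [c]

/-- All plant indices involved in some requirement of `R`. -/
noncomputable def involved (PR : I → J → Prop) [Fintype I] (R : Finset J) : Finset I :=
  Finset.univ.filter fun i => ∃ r ∈ R, PR i r

/-- The subroutine PropReq: distributes the requirements of a node over the node
itself and its bus and non-bus children, and returns (as second component) the
accumulator set `P` of all plant indices involved in the requirements that remain. -/
noncomputable def propReq (PR : I → J → Prop) [Fintype I] :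
    MLC I J → MLC I J × Finset I
  | .mk A B M R =>
    (.mk A (B.map fun c => c.setReqs (c.reqs ∪ toBus PR B M R c))
           (M.map fun c => c.setReqs (c.reqs ∪ toNonbus PR M R c))
           (stayReqs PR B M R),
     involved PR (stayReqs PR B M R))

/-- The output tree of TransformCtoT: each node carries the element set of the
corresponding cluster together with its synthesis subproblem, i.e. a set of plant
indices and a set of requirement indices. -/
inductive SPTree (I J : Type) : Type where
  | mk : Finset I → Finset I → Finset J → List (SPTree I J) → SPTree I J

namespace SPTree

/-- Element set of the cluster corresponding to an output node. -/
def elemsS : SPTree I J → Finset I | mk A _ _ _ => A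
/-- Plant index set of the synthesis subproblem of an output node. -/
def plants : SPTree I J → Finset I | mk _ P _ _ => P
/-- Requirement index set of the synthesis subproblem of an output node. -/
def sreqs : SPTree I J → Finset J | mk _ _ R _ => R
/-- Children of an output node. -/
def chs : SPTree I J → List (SPTree I J) | mk _ _ _ cs => cs

end SPTree

/-- TransformCtoT (with the requirements pushed down by the parent passed as the
extra argument `Rin`): at a leaf it outputs the subproblem consisting of the leaf's
element together with all plants involved in its requirements; at an internal node
it performs PropReq, keeps the remaining requirements together with the plants they
involve, and recursively processes every bus child and every non-bus child with the
requirement sets moved into them. -/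
noncomputable def transform (PR : I → J → Prop) [Fintype I] :
    MLC I J → Finset J → SPTree I J
  | .mk A B M R, Rin =>
    if B ++ M = [] then
      SPTree.mk A (A ∪ involved PR (R ∪ Rin)) (R ∪ Rin) []
    else
      SPTree.mk A (involved PR (stayReqs PR B M (R ∪ Rin)))
        (stayReqs PR B M (R ∪ Rin))
        ((B.attach.map fun ⟨c, _hc⟩ => transform PR c (toBus PR B M (R ∪ Rin) c)) ++
         (M.attach.map fun ⟨c, _hc⟩ => transform PR c (toNonbus PR M (R ∪ Rin) c)))

mutual
/-- Number of occurrences of requirement index `j` among the requirement sets of the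
nodes of a multilevel clustering. -/
noncomputable def reqCountM (j : J) : MLC I J → ℕ
  | .mk _ B M R => (if j ∈ R then 1 else 0) + reqCountL j B + reqCountL j M
noncomputable def reqCountL (j : J) : List (MLC I J) → ℕ
  | [] => 0
  | c :: cs => reqCountM j c + reqCountL j cs
end

mutual
/-- Number of occurrences of requirement index `j` among the requirement sets of the
synthesis subproblems of the nodes of an output tree. -/
noncomputable def reqCountS (j : J) : SPTree I J → ℕ
  | .mk _ _ R cs => (if j ∈ R then 1 else 0) + reqCountSL j cs
noncomputable def reqCountSL (j : J) : List (SPTree I J) → ℕ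
  | [] => 0
  | c :: cs => reqCountS j c + reqCountSL j cs
end

mutual
/-- The list of all nodes of an output tree. -/
def allNodes : SPTree I J → List (SPTree I J)
  | .mk A P R cs => .mk A P R cs :: allNodesL cs
def allNodesL : List (SPTree I J) → List (SPTree I J)
  | [] => []
  | c :: cs => allNodes c ++ allNodesL cs
end

mutual
/-- All requirement sets in a multilevel clustering are empty. -/
def allReqsEmpty : MLC I J → Prop
  | .mk _ B M R => R = ∅ ∧ allReqsEmptyL B ∧ allReqsEmptyL M
def allReqsEmptyL : List (MLC I J) → Prop
  | [] => True
  | c :: cs => allReqsEmpty c ∧ allReqsEmptyL cs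
end

mutual
/-- The list of leaves of a multilevel clustering. -/
def leaves : MLC I J → List (MLC I J)
  | .mk A [] [] R => [.mk A [] [] R]
  | .mk _ B M _ => leavesL B ++ leavesL M
def leavesL : List (MLC I J) → List (MLC I J)
  | [] => []
  | c :: cs => leaves c ++ leavesL cs
end

/-- `callRel u v` holds iff, when TransformCtoT is run on the (well-formed) internal
node `v`, it performs a recursive call on `u`, i.e. `u` is one of the bus or non-bus
children of `v` with an updated requirement set. -/
def callRel (u v : MLC I J) : Prop :=
  MLC.WF v ∧ v.children ≠ [] ∧ ∃ c ∈ v.children, ∃ R' : Finset J, u = c.setReqs R'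

section AuxConservation

variable {I J : Type}

lemma sum_indicator_zero' {α : Type} (L : List α) (f : α → ℕ)
    (h : ∀ x ∈ L, f x = 0) : (L.map f).sum = 0 := by
  induction L with
  | nil => rfl
  | cons a l ih =>
    simp only [List.map_cons, List.sum_cons, h a (by simp),
      ih (fun x hx => h x (by simp [hx])), Nat.zero_add]

lemma sum_ind_eq_one' {α : Type} (p : α → Bool) :
    ∀ (L : List α) (c : α), L.filter p = [c] →
      (L.map fun c' => if c = c' then (1:ℕ) else 0).sum = 1 := by
  intro L
  induction L with
  | nil => intro c hc; simp at hc
  | cons a l ih =>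
    intro c hc
    by_cases hpa : p a
    · rw [List.filter_cons_of_pos hpa] at hc
      obtain ⟨hac, hrest⟩ := List.cons.injEq _ _ _ _ ▸ hc
      subst hac
      have h0 : (l.map fun c' => if a = c' then (1:ℕ) else 0).sum = 0 := by
        apply sum_indicator_zero'
        intro x hx
        by_cases hax : a = x
        · exfalso
          have hxin : x ∈ l.filter p := List.mem_filter.mpr ⟨hx, hax ▸ hpa⟩
          rw [hrest] at hxin
          exact absurd hxin List.not_mem_nil
        · simp [hax]
      simp [List.map_cons, List.sum_cons, h0]
    · rw [List.filter_cons_of_neg hpa] at hc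
      have hac : ¬ (c = a) := by
        intro h
        have : c ∈ l.filter p := by rw [hc]; simp
        have := List.mem_filter.mp this
        exact hpa (h ▸ this.2)
      simp only [List.map_cons, List.sum_cons, if_neg hac, Nat.zero_add]
      exact ih c hc

lemma sum_filter_ind' {α : Type} (p : α → Bool) (L : List α) :
    (L.map fun c => if L.filter p = [c] then (1:ℕ) else 0).sum
      = if (L.filter p).length = 1 then 1 else 0 := by
  by_cases h : (L.filter p).length = 1
  · obtain ⟨c, hc⟩ := List.length_eq_one_iff.mp h
    rw [if_pos h]
    have heq : (L.map fun c' => if L.filter p = [c'] then (1:ℕ) else 0)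
        = L.map fun c' => if c = c' then (1:ℕ) else 0 := by
      apply List.map_congr_left
      intro a _
      rw [hc]
      by_cases hca : c = a
      · subst hca; simp
      · rw [if_neg hca, if_neg (by simp [hca])]
    rw [heq]
    exact sum_ind_eq_one' p L c hc
  · rw [if_neg h]
    apply sum_indicator_zero'
    intro x _
    by_cases hfx : L.filter p = [x]
    · exact absurd (by rw [hfx]; rfl) h
    · simp [hfx]

lemma reqCountSL_append (j : J) (l₁ l₂ : List (SPTree I J)) :
    reqCountSL j (l₁ ++ l₂) = reqCountSL j l₁ + reqCountSL j l₂ := by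
  induction l₁ with
  | nil => simp [reqCountSL]
  | cons a l ih => simp only [List.cons_append, reqCountSL, List.append_eq, ih]; omega

lemma reqCountSL_map (j : J) (L : List (MLC I J)) (F : MLC I J → SPTree I J) :
    reqCountSL j (L.map F) = (L.map fun c => reqCountS j (F c)).sum := by
  induction L with
  | nil => rfl
  | cons a l ih => simp only [List.map_cons, reqCountSL, ih, List.sum_cons]

lemma reqCountL_eq_sum (j : J) (L : List (MLC I J)) :
    reqCountL j L = (L.map (reqCountM j)).sum := by
  induction L with
  | nil => rfl
  | cons a l ih => simp only [List.map_cons, reqCountL, ih, List.sum_cons]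

lemma reqCountM_le_of_mem (j : J) {c : MLC I J} {L : List (MLC I J)} (h : c ∈ L) :
    reqCountM j c ≤ reqCountL j L := by
  induction L with
  | nil => exact absurd h List.not_mem_nil
  | cons a l ih =>
    rcases List.mem_cons.mp h with h | h
    · subst h; simp only [reqCountL]; omega
    · have := ih h; simp only [reqCountL]; omega

lemma sum_map_add' {α : Type} (L : List α) (f g : α → ℕ) :
    (L.map fun c => f c + g c).sum = (L.map f).sum + (L.map g).sum := by
  induction L with
  | nil => rfl
  | cons a l ih => simp only [List.map_cons, List.sum_cons, ih]; omega

lemma nonbus_sum (PR : I → J → Prop) (M : List (MLC I J)) (Rt : Finset J) (j : J)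
    (hj : j ∈ Rt) :
    (M.map fun c => if j ∈ toNonbus PR M Rt c then (1:ℕ) else 0).sum
      = if (relF PR j M).length = 1 then 1 else 0 := by
  have h : ∀ c ∈ M, (if j ∈ toNonbus PR M Rt c then (1:ℕ) else 0)
      = if relF PR j M = [c] then 1 else 0 := by
    intro c _
    by_cases hc : relF PR j M = [c] <;> simp [toNonbus, Finset.mem_filter, hj, hc]
  rw [List.map_congr_left h]
  exact sum_filter_ind' (fun c => decide (rel PR j c)) M

lemma bus_sum (PR : I → J → Prop) (B M : List (MLC I J)) (Rt : Finset J) (j : J)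
    (hj : j ∈ Rt) :
    (B.map fun c => if j ∈ toBus PR B M Rt c then (1:ℕ) else 0).sum
      = if (relF PR j M = [] ∧ (relF PR j B).length = 1) then 1 else 0 := by
  by_cases hme : relF PR j M = []
  · have h : ∀ c ∈ B, (if j ∈ toBus PR B M Rt c then (1:ℕ) else 0)
        = if relF PR j B = [c] then 1 else 0 := by
      intro c _
      by_cases hc : relF PR j B = [c] <;> simp [toBus, Finset.mem_filter, hj, hme, hc]
    rw [List.map_congr_left h]
    have hthis : (B.map fun c => if relF PR j B = [c] then (1:ℕ) else 0).sum
        = if (relF PR j B).length = 1 then 1 else 0 :=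
      sum_filter_ind' (fun c => decide (rel PR j c)) B
    rw [hthis]
    by_cases hb : (relF PR j B).length = 1 <;> simp [hb, hme]
  · have h0 : (B.map fun c => if j ∈ toBus PR B M Rt c then (1:ℕ) else 0).sum = 0 := by
      apply sum_indicator_zero'
      intro c _
      simp [toBus, Finset.mem_filter, hme]
    rw [h0]
    simp [hme]

lemma stay_ind (PR : I → J → Prop) (B M : List (MLC I J)) (Rt : Finset J) (j : J)
    (hj : j ∈ Rt) :
    (if j ∈ stayReqs PR B M Rt then (1:ℕ) else 0)
      = if (¬ (relF PR j M).length = 1 ∧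
            ¬ (relF PR j M = [] ∧ (relF PR j B).length = 1)) then 1 else 0 := by
  have hiff : j ∈ stayReqs PR B M Rt ↔
      (¬ (relF PR j M).length = 1 ∧ ¬ (relF PR j M = [] ∧ (relF PR j B).length = 1)) := by
    simp [stayReqs, Finset.mem_filter, hj]
  by_cases hc : (¬ (relF PR j M).length = 1 ∧
      ¬ (relF PR j M = [] ∧ (relF PR j B).length = 1)) <;> simp [hiff, hc]

end AuxConservation
section MainConservation

variable {I J : Type}

lemma map_attach_eq {α β : Type} (L : List α) (F : α → β) :
    (L.attach.map fun x => F x.1) = L.map F := List.attach_map_val (l := L) (f := F)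

mutual
theorem count_empty (j : J) : ∀ (c : MLC I J), allReqsEmpty c → reqCountM j c = 0
  | .mk A B M R, h => by
      simp only [allReqsEmpty] at h
      obtain ⟨h1, h2, h3⟩ := h
      simp [reqCountM, h1, count_emptyL j B h2, count_emptyL j M h3]
  theorem count_emptyL (j : J) : ∀ (L : List (MLC I J)), allReqsEmptyL L → reqCountL j L = 0
    | [], _ => rfl
    | c :: cs, h => by
      simp only [allReqsEmptyL] at h
      obtain ⟨h1, h2⟩ := h
      simp [reqCountL, count_empty j c h1, count_emptyL j cs h2]
  end

  lemma reqCountL_zero (j : J) (L : List (MLC I J)) (h : ∀ c ∈ L, allReqsEmpty c) :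
      reqCountL j L = 0 := by
    induction L with
    | nil => rfl
    | cons a l ih =>
      simp [reqCountL, count_empty j a (h a (by simp)),
        ih (fun c hc => h c (by simp [hc]))]

  theorem conserve (PR : I → J → Prop) [Fintype I] :
      ∀ (s : MLC I J) (Rin : Finset J),
        (∀ j : J, reqCountM j s ≤ 1) → (∀ j ∈ Rin, reqCountM j s = 0) →
        ∀ j : J, reqCountS j (transform PR s Rin) = reqCountM j s + (if j ∈ Rin then 1 else 0)
  | .mk A B M R, Rin, h1, h2, j => by
    by_cases hbm : B ++ M = []
    · obtain ⟨hB, hM⟩ := List.append_eq_nil_iff.mp hbm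
      subst hB; subst hM
      have htr : transform PR (MLC.mk A [] [] R) Rin
          = SPTree.mk A (A ∪ involved PR (R ∪ Rin)) (R ∪ Rin) [] := by
        rw [transform, if_pos hbm]
      rw [htr]
      simp only [reqCountS, reqCountSL, reqCountM, reqCountL, Nat.add_zero]
      by_cases hin : j ∈ Rin
      · have h0 := h2 j hin
        simp only [reqCountM, reqCountL, Nat.add_zero] at h0
        have hnR : j ∉ R := by
          intro hR; rw [if_pos hR] at h0; omega
        simp [Finset.mem_union, hin, hnR]
      · by_cases hR : j ∈ R <;> simp [Finset.mem_union, hin, hR]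
    · set Rt := R ∪ Rin with hRt
      have htr : transform PR (MLC.mk A B M R) Rin
          = SPTree.mk A (involved PR (stayReqs PR B M Rt))
              (stayReqs PR B M Rt)
              ((B.attach.map fun x => transform PR x.1 (toBus PR B M Rt x.1)) ++
               (M.attach.map fun x => transform PR x.1 (toNonbus PR M Rt x.1))) := by
        rw [transform, if_neg hbm]
      rw [htr]
      simp only [reqCountS, reqCountM]
      rw [reqCountSL_append]
      have hbmap : (B.attach.map fun x => transform PR x.1 (toBus PR B M Rt x.1))
          = B.map fun c => transform PR c (toBus PR B M Rt c) :=
        map_attach_eq B (fun c => transform PR c (toBus PR B M Rt c))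
      have hmmap : (M.attach.map fun x => transform PR x.1 (toNonbus PR M Rt x.1))
          = M.map fun c => transform PR c (toNonbus PR M Rt c) :=
        map_attach_eq M (fun c => transform PR c (toNonbus PR M Rt c))
      rw [hbmap, hmmap, reqCountSL_map, reqCountSL_map]
      -- apply the induction hypothesis to every child
      have hch0 : ∀ j' ∈ Rt, reqCountL j' B = 0 ∧ reqCountL j' M = 0 := by
        intro j' hj'
        rcases Finset.mem_union.mp hj' with h | h
        · have := h1 j'
          simp only [reqCountM] at this
          rw [if_pos h] at this
          omega
        · have := h2 j' h
          simp only [reqCountM] at this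
          omega
      have hBz : ∀ c ∈ B, reqCountS j (transform PR c (toBus PR B M Rt c))
          = reqCountM j c + (if j ∈ toBus PR B M Rt c then 1 else 0) := by
        intro c hc
        apply conserve PR c
        · intro j'
          have hle := reqCountM_le_of_mem j' hc
          have := h1 j'
          simp only [reqCountM] at this
          omega
        · intro j' hj'
          have hjRt : j' ∈ Rt := (Finset.mem_filter.mp hj').1
          have hle := reqCountM_le_of_mem j' hc
          have := (hch0 j' hjRt).1
          omega
      have hMz : ∀ c ∈ M, reqCountS j (transform PR c (toNonbus PR M Rt c))
          = reqCountM j c + (if j ∈ toNonbus PR M Rt c then 1 else 0) := by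
        intro c hc
        apply conserve PR c
        · intro j'
          have hle := reqCountM_le_of_mem j' hc
          have := h1 j'
          simp only [reqCountM] at this
          omega
        · intro j' hj'
          have hjRt : j' ∈ Rt := (Finset.mem_filter.mp hj').1
          have hle := reqCountM_le_of_mem j' hc
          have := (hch0 j' hjRt).2
          omega
      rw [List.map_congr_left hBz, List.map_congr_left hMz,
        sum_map_add' B (reqCountM j) (fun c => if j ∈ toBus PR B M Rt c then 1 else 0),
        sum_map_add' M (reqCountM j) (fun c => if j ∈ toNonbus PR M Rt c then 1 else 0),
        ← reqCountL_eq_sum j B, ← reqCountL_eq_sum j M]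
      -- the key conservation identity at this node
      have key : (if j ∈ stayReqs PR B M Rt then (1:ℕ) else 0)
          + (B.map fun c => if j ∈ toBus PR B M Rt c then (1:ℕ) else 0).sum
          + (M.map fun c => if j ∈ toNonbus PR M Rt c then (1:ℕ) else 0).sum
          = (if j ∈ R then 1 else 0) + (if j ∈ Rin then 1 else 0) := by
        by_cases hjRt : j ∈ Rt
        · have hRRin : (if j ∈ R then (1:ℕ) else 0) + (if j ∈ Rin then (1:ℕ) else 0) = 1 := by
            by_cases hin : j ∈ Rin
            · have h0 := h2 j hin
              simp only [reqCountM] at h0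
              have hnR : j ∉ R := by intro hR; rw [if_pos hR] at h0; omega
              simp [hin, hnR]
            · have hR : j ∈ R := by
                rcases Finset.mem_union.mp hjRt with h | h
                · exact h
                · exact absurd h hin
              simp [hin, hR]
          rw [hRRin, stay_ind PR B M Rt j hjRt, bus_sum PR B M Rt j hjRt,
            nonbus_sum PR M Rt j hjRt]
          by_cases h1m : (relF PR j M).length = 1
          · have hQ : ¬(relF PR j M = [] ∧ (relF PR j B).length = 1) := by
              rintro ⟨h, _⟩
              rw [h] at h1m
              simp at h1m
            simp [h1m, hQ]
          · by_cases hQ : (relF PR j M = [] ∧ (relF PR j B).length = 1)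
            · simp [h1m, hQ]
            · simp [h1m, hQ]
        · have hnR : j ∉ R := fun h => hjRt (Finset.mem_union.mpr (Or.inl h))
          have hnin : j ∉ Rin := fun h => hjRt (Finset.mem_union.mpr (Or.inr h))
          have hs : j ∉ stayReqs PR B M Rt := fun h => hjRt (Finset.mem_filter.mp h).1
          have hb0 : (B.map fun c => if j ∈ toBus PR B M Rt c then (1:ℕ) else 0).sum = 0 := by
            apply sum_indicator_zero'
            intro c _
            have : j ∉ toBus PR B M Rt c := fun h => hjRt (Finset.mem_filter.mp h).1
            simp [this]
          have hm0 : (M.map fun c => if j ∈ toNonbus PR M Rt c then (1:ℕ) else 0).sum = 0 := by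
            apply sum_indicator_zero'
            intro c _
            have : j ∉ toNonbus PR M Rt c := fun h => hjRt (Finset.mem_filter.mp h).1
            simp [this]
          simp [hs, hb0, hm0, hnR, hnin]
      omega
termination_by s => sizeOf s
decreasing_by
    all_goals
      (have hlt := List.sizeOf_lt_of_mem hc
       simp only [MLC.mk.sizeOf_spec]
       omega)

end MainConservation
/-- Requirement model conservation: Let TransformCtoT be run on a
well-formed multilevel clustering with local buses, initially invoked with the full
requirement index set `J` at the root and empty requirement sets at all other nodes.
Then at every stage of the traversal (i.e. for every recursive call on a subtree `s`
with incoming requirement set `Rin`, where the requirement sets carried by the nodes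
of `s` together with `Rin` are pairwise disjoint) requirements are neither lost nor
duplicated: each requirement occurs in the nodes of the resulting output tree exactly
as often as before. Consequently, in the final output tree every requirement index
`j ∈ J` belongs to the requirement set of exactly one node's synthesis subproblem. -/
theorem requirement_conservation {I J : Type} [Fintype I] [Fintype J]
    (PR : I → J → Prop) (t : MLC I J) (hwf : MLC.WF t)
    (hroot : t.reqs = (Finset.univ : Finset J))
    (hdesc : ∀ c ∈ t.children, allReqsEmpty c) :
    (∀ (s : MLC I J) (Rin : Finset J), MLC.WF s →
      (∀ j : J, reqCountM j s ≤ 1) → (∀ j ∈ Rin, reqCountM j s = 0) →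
      ∀ j : J, reqCountS j (transform PR s Rin)
        = reqCountM j s + (if j ∈ Rin then 1 else 0)) ∧
    (∀ j : J, reqCountS j (transform PR t ∅) = 1) := by
  refine ⟨fun s Rin _ h1 h2 j => conserve PR s Rin h1 h2 j, ?_⟩
  intro j
  obtain ⟨A, B, M, R⟩ := t
  have hR : R = (Finset.univ : Finset J) := hroot
  have hBM : ∀ c ∈ B ++ M, allReqsEmpty c := fun c hc => hdesc c hc
  have hB0 : ∀ j' : J, reqCountL j' B = 0 :=
    fun j' => reqCountL_zero j' B (fun c hc => hBM c (by simp [hc]))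
  have hM0 : ∀ j' : J, reqCountL j' M = 0 :=
    fun j' => reqCountL_zero j' M (fun c hc => hBM c (by simp [hc]))
  have h1 : ∀ j' : J, reqCountM j' (MLC.mk A B M R) ≤ 1 := by
    intro j'
    simp only [reqCountM, hB0, hM0]
    by_cases h : j' ∈ R <;> simp [h]
  have h2 : ∀ j' ∈ (∅ : Finset J), reqCountM j' (MLC.mk A B M R) = 0 := by simp
  rw [conserve PR (MLC.mk A B M R) ∅ h1 h2 j]
  simp [reqCountM, hB0, hM0, hR]
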